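/- Let R be a finite valuation ring and let ψ be a nontrivial additive character of R and χ a nontrivial multiplicative character of R^×. If the valuations of ψ and χ differ, then the Gauss sum G(ψ,χ) = Σ_{u ∈ R^×} ψ(u)χ(u) equals 0. -/

import Mathlib

open Finset

theorem gauss_sum_eq_zero_of_valuations_differ
    (R : Type*) [CommRing R] [Fintype R] [DecidableEq R] [IsLocalRing R]
    [IsPrincipalIdealRing R]
    (π : R) (hπ : IsLocalRing.maximalIdeal R = Ideal.span {π})
    (ψ : AddChar R ℂ) (χ : Rˣ →* ℂ) (hψ : ψ ≠ 1) (hχ : χ ≠ 1) (k j : ℕ)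
    (hkj : k ≠ j)
    (hψtriv : ∀ x ∈ Ideal.span {π ^ k}, ψ x = 1)
    (hψmin : ∀ i < k, ∃ x ∈ Ideal.span {π ^ i}, ψ x ≠ 1)
    (hχtriv : ∀ u : Rˣ, (u : R) - 1 ∈ Ideal.span {π ^ j} → χ u = 1)
    (hχmin : ∀ i < j, ∃ u : Rˣ, (u : R) - 1 ∈ Ideal.span {π ^ i} ∧ χ u ≠ 1) :
    ∑ u : Rˣ, ψ (u : R) * χ u = 0 := by
  classical
  -- reindexing lemma
  have reindex : ∀ t : Rˣ, ∑ u : Rˣ, ψ (u : R) * χ u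
      = ∑ u : Rˣ, ψ ((u : R) * (t : R)) * χ (u * t) := by
    intro t
    have := (Equiv.sum_comp (Equiv.mulRight t) (fun u : Rˣ => ψ (u : R) * χ u)).symm
    simpa using this
  have hk0 : k ≠ 0 := by
    rintro rfl
    apply hψ
    ext x
    exact hψtriv x (by simp)
  have hj0 : j ≠ 0 := by
    rintro rfl
    apply hχ
    ext u
    exact hχtriv u (by simp)
  rcases lt_or_gt_of_ne hkj with hlt | hgt
  · -- k < j : twist by t with t - 1 ∈ (π^k), χ t ≠ 1
    obtain ⟨t, ht1, ht2⟩ := hχmin k hlt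
    have key : ∑ u : Rˣ, ψ (u : R) * χ u = χ t * ∑ u : Rˣ, ψ (u : R) * χ u := by
      conv_lhs => rw [reindex t]
      rw [Finset.mul_sum]
      refine Finset.sum_congr rfl fun u _ => ?_
      have h1 : ψ ((u : R) * (t : R)) = ψ (u : R) := by
        have : (u : R) * (t : R) = (u : R) + (u : R) * ((t : R) - 1) := by ring
        rw [this, ψ.map_add_eq_mul, hψtriv _ (Ideal.mul_mem_left _ _ ht1), mul_one]
      rw [h1, χ.map_mul]
      ring
    exact eq_zero_of_mul_eq_self_left ht2 key.symm
  · -- j < k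
    set I := Ideal.span {π ^ (k - 1)} with hI
    -- I ⊆ maximal ideal
    have hImax : I ≤ IsLocalRing.maximalIdeal R := by
      rw [hπ, hI, Ideal.span_le]
      intro x hx
      simp only [Set.mem_singleton_iff] at hx
      subst hx
      have : π ^ (k - 1) = π * π ^ (k - 2) := by
        rw [← pow_succ']
        congr 1
        omega
      rw [this]
      exact Ideal.mul_mem_right _ _ (Ideal.mem_span_singleton_self π)
    have hIj : I ≤ Ideal.span {π ^ j} := by
      rw [hI]
      exact Ideal.span_singleton_le_span_singleton.2 (pow_dvd_pow π (by omega))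
    -- for z ∈ I, 1 + z is a unit
    have hunit : ∀ z ∈ I, IsUnit (1 + z) := by
      intro z hz
      by_contra h
      have h1 : (1 + z) ∈ IsLocalRing.maximalIdeal R :=
        (IsLocalRing.mem_maximalIdeal _).2 h
      have h2 : (1 : R) ∈ IsLocalRing.maximalIdeal R := by
        have := (IsLocalRing.maximalIdeal R).sub_mem h1 (hImax hz)
        simpa using this -- (1+z) - z = 1
      exact (IsLocalRing.maximalIdeal.isMaximal R).ne_top ((Ideal.eq_top_iff_one _).2 h2)
    -- ψ restricted to I is nontrivial, hence sums to 0
    have hsum0 : ∑ z : I, ψ (z : R) = 0 := by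
      obtain ⟨x, hx, hxψ⟩ := hψmin (k - 1) (by omega)
      have : (ψ.compAddMonoidHom I.toAddSubgroup.subtype) ≠ 1 :=
        AddChar.ne_one_iff.2 ⟨⟨x, hx⟩, hxψ⟩
      have h := AddChar.sum_eq_zero_of_ne_one this
      simp at h
      convert h
    -- for a unit u, multiplication by u permutes I
    have hsum0' : ∀ u : Rˣ, ∑ z : I, ψ ((u : R) * (z : R)) = 0 := by
      intro u
      let e : I ≃ I :=
        { toFun := fun z => ⟨(u : R) * z, Ideal.mul_mem_left _ _ z.2⟩
          invFun := fun z => ⟨((u⁻¹ : Rˣ) : R) * z, Ideal.mul_mem_left _ _ z.2⟩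
          left_inv := fun z => by
            ext; simp [← mul_assoc]
          right_inv := fun z => by
            ext; simp [← mul_assoc] }
      have h := Equiv.sum_comp e (fun z : I => ψ (z : R))
      exact h.trans hsum0
    -- main computation
    have key : (Fintype.card I : ℂ) * (∑ u : Rˣ, ψ (u : R) * χ u) = 0 := by
      have step1 : ∀ z : I, ∑ u : Rˣ, ψ (u : R) * χ u
          = ∑ u : Rˣ, ψ ((u : R) * (1 + (z : R))) * χ u := by
        intro z
        obtain ⟨t, ht⟩ := hunit (z : R) z.2
        rw [reindex t]
        refine Finset.sum_congr rfl fun u _ => ?_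
        have hχt : χ t = 1 := by
          apply hχtriv
          rw [ht]
          simpa using hIj z.2
        rw [χ.map_mul, hχt, mul_one, ht]
      calc (Fintype.card I : ℂ) * (∑ u : Rˣ, ψ (u : R) * χ u)
          = ∑ _z : I, ∑ u : Rˣ, ψ (u : R) * χ u := by
            rw [Finset.sum_const, Finset.card_univ, nsmul_eq_mul]
        _ = ∑ z : I, ∑ u : Rˣ, ψ ((u : R) * (1 + (z : R))) * χ u :=
            Finset.sum_congr rfl fun z _ => step1 z
        _ = ∑ u : Rˣ, ∑ z : I, ψ ((u : R) * (1 + (z : R))) * χ u := Finset.sum_comm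
        _ = ∑ u : Rˣ, (ψ (u : R) * χ u) * ∑ z : I, ψ ((u : R) * (z : R)) := by
            refine Finset.sum_congr rfl fun u _ => ?_
            rw [Finset.mul_sum]
            refine Finset.sum_congr rfl fun z _ => ?_
            have : (u : R) * (1 + (z : R)) = (u : R) + (u : R) * (z : R) := by ring
            rw [this, ψ.map_add_eq_mul]
            ring
        _ = 0 := by
            refine Finset.sum_eq_zero fun u _ => ?_
            rw [hsum0' u, mul_zero]
    have hcard : (Fintype.card I : ℂ) ≠ 0 := by
      exact_mod_cast Fintype.card_ne_zero
    exact (mul_eq_zero.1 key).resolve_left hcard
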